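/- arXiv:1412.5813 — 3 statements merged into one kernel-verified Lean document; each statement's English description precedes it below -/
import Mathlib

section
/- For a unit quaternion q, the matrix exponential of -Γ(h/2)·J(q), where J(q) = (M/4) S(q) D S(q)^T, equals q q^T + Σ_{l=1}^3 e^{-Γ M h/(8 I_l)} (S_l q)(S_l q)^T. In particular, restricted to the orthogonal complement of q it is given by Σ_{l=1}^3 e^{-Γ M h/(8 I_l)} (S_l q)(S_l q)^T. -/
open Matrix Real

noncomputable section

def S1 : Matrix (Fin 4) (Fin 4) ℝ := !![0,-1,0,0; 1,0,0,0; 0,0,0,1; 0,0,-1,0]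
def S2 : Matrix (Fin 4) (Fin 4) ℝ := !![0,0,-1,0; 0,0,0,-1; 1,0,0,0; 0,1,0,0]
def S3 : Matrix (Fin 4) (Fin 4) ℝ := !![0,0,0,-1; 0,0,1,0; 0,-1,0,0; 1,0,0,0]

/-- `S(q)`: the 4×4 matrix with columns `q, S₁q, S₂q, S₃q`. -/
def Smat (q : Fin 4 → ℝ) : Matrix (Fin 4) (Fin 4) ℝ :=
  Matrix.of fun i j => ![q, S1.mulVec q, S2.mulVec q, S3.mulVec q] j i

lemma Smat_orth (q : Fin 4 → ℝ) (hq : q ⬝ᵥ q = 1) :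
    (Smat q)ᵀ * Smat q = 1 := by
  ext i j
  have h := hq
  simp only [dotProduct, Fin.sum_univ_four] at h
  fin_cases i <;> fin_cases j <;>
    simp [Smat, S1, S2, S3, Matrix.mul_apply, Matrix.mulVec, dotProduct,
      Fin.sum_univ_four, Matrix.one_apply] <;> linarith [h]

lemma conj_diag (q : Fin 4 → ℝ) (w : Fin 4 → ℝ) :
    Smat q * Matrix.diagonal w * (Smat q)ᵀ =
      w 0 • Matrix.vecMulVec q q +
      w 1 • Matrix.vecMulVec (S1.mulVec q) (S1.mulVec q) +
      w 2 • Matrix.vecMulVec (S2.mulVec q) (S2.mulVec q) +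
      w 3 • Matrix.vecMulVec (S3.mulVec q) (S3.mulVec q) := by
  ext i j
  simp [Smat, Matrix.mul_apply, Matrix.diagonal, Fin.sum_univ_four,
    Matrix.vecMulVec_apply]
  ring

/-- the matrix exponential of `-Γ(h/2) J(q)`, with
`J(q) = (M/4) S(q) D S(q)ᵀ`, equals `q qᵀ + Σ_l e^{-ΓMh/(8 I_l)} (S_l q)(S_l q)ᵀ`;
in particular on the orthogonal complement of `q` it acts as
`Σ_l e^{-ΓMh/(8 I_l)} (S_l q)(S_l q)ᵀ`. -/
theorem exp_damping_matrix (q : Fin 4 → ℝ) (hq : q ⬝ᵥ q = 1)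
    (Γ M h I1 I2 I3 : ℝ) (hΓ : 0 < Γ) (hM : 0 < M) (hh : 0 < h)
    (hI1 : 0 < I1) (hI2 : 0 < I2) (hI3 : 0 < I3) :
    NormedSpace.exp ((-(Γ * (h / 2))) •
        ((M / 4) • (Smat q * Matrix.diagonal ![0, 1 / I1, 1 / I2, 1 / I3] * (Smat q)ᵀ))) =
      Matrix.vecMulVec q q +
        (Real.exp (-(Γ * M * h) / (8 * I1)) • Matrix.vecMulVec (S1.mulVec q) (S1.mulVec q) +
         Real.exp (-(Γ * M * h) / (8 * I2)) • Matrix.vecMulVec (S2.mulVec q) (S2.mulVec q) +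
         Real.exp (-(Γ * M * h) / (8 * I3)) • Matrix.vecMulVec (S3.mulVec q) (S3.mulVec q)) ∧
    ∀ piv : Fin 4 → ℝ, q ⬝ᵥ piv = 0 →
      (NormedSpace.exp ((-(Γ * (h / 2))) •
          ((M / 4) • (Smat q * Matrix.diagonal ![0, 1 / I1, 1 / I2, 1 / I3] *
            (Smat q)ᵀ)))).mulVec piv =
      (Real.exp (-(Γ * M * h) / (8 * I1)) • Matrix.vecMulVec (S1.mulVec q) (S1.mulVec q) +
       Real.exp (-(Γ * M * h) / (8 * I2)) • Matrix.vecMulVec (S2.mulVec q) (S2.mulVec q) +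
       Real.exp (-(Γ * M * h) / (8 * I3)) • Matrix.vecMulVec (S3.mulVec q) (S3.mulVec q)).mulVec piv := by
  have hst : (Smat q)ᵀ * Smat q = 1 := Smat_orth q hq
  have hts : Smat q * (Smat q)ᵀ = 1 := mul_eq_one_comm.mp hst
  set c : ℝ := -(Γ * (h / 2)) * (M / 4) with hc
  have hsm : (-(Γ * (h / 2))) •
      ((M / 4) • (Smat q * Matrix.diagonal ![0, 1 / I1, 1 / I2, 1 / I3] * (Smat q)ᵀ)) =
      Smat q * Matrix.diagonal (c • ![0, 1 / I1, 1 / I2, 1 / I3]) * (Smat q)ᵀ := by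
    rw [smul_smul, ← hc, Matrix.diagonal_smul]
    simp [Matrix.mul_smul, Matrix.smul_mul]
  set U : (Matrix (Fin 4) (Fin 4) ℝ)ˣ := ⟨Smat q, (Smat q)ᵀ, hts, hst⟩ with hU
  have hconj : NormedSpace.exp
      (Smat q * Matrix.diagonal (c • ![0, 1 / I1, 1 / I2, 1 / I3]) * (Smat q)ᵀ) =
      Smat q * NormedSpace.exp (Matrix.diagonal (c • ![0, 1 / I1, 1 / I2, 1 / I3])) *
        (Smat q)ᵀ := by
    have := Matrix.exp_units_conj U (Matrix.diagonal (c • ![0, 1 / I1, 1 / I2, 1 / I3]))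
    simpa [hU] using this
  have hdiag : NormedSpace.exp (Matrix.diagonal (c • ![0, 1 / I1, 1 / I2, 1 / I3])) =
      Matrix.diagonal ![1, Real.exp (-(Γ * M * h) / (8 * I1)),
        Real.exp (-(Γ * M * h) / (8 * I2)), Real.exp (-(Γ * M * h) / (8 * I3))] := by
    have hv : NormedSpace.exp (c • ![0, 1 / I1, 1 / I2, 1 / I3]) =
        ![1, Real.exp (-(Γ * M * h) / (8 * I1)),
          Real.exp (-(Γ * M * h) / (8 * I2)), Real.exp (-(Γ * M * h) / (8 * I3))] := by
      funext i
      rw [Pi.coe_exp, ← Real.exp_eq_exp_ℝ]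
      fin_cases i <;> simp [hc]
      all_goals congr 1; field_simp; ring
    rw [Matrix.exp_diagonal, hv]
  have key : NormedSpace.exp ((-(Γ * (h / 2))) •
      ((M / 4) • (Smat q * Matrix.diagonal ![0, 1 / I1, 1 / I2, 1 / I3] * (Smat q)ᵀ))) =
      Matrix.vecMulVec q q +
        (Real.exp (-(Γ * M * h) / (8 * I1)) • Matrix.vecMulVec (S1.mulVec q) (S1.mulVec q) +
         Real.exp (-(Γ * M * h) / (8 * I2)) • Matrix.vecMulVec (S2.mulVec q) (S2.mulVec q) +
         Real.exp (-(Γ * M * h) / (8 * I3)) • Matrix.vecMulVec (S3.mulVec q) (S3.mulVec q)) := by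
    rw [hsm, hconj, hdiag, conj_diag]
    simp [add_assoc]
  refine ⟨key, fun piv hpiv => ?_⟩
  rw [key, Matrix.add_mulVec]
  have : (Matrix.vecMulVec q q).mulVec piv = 0 := by
    ext i
    simp only [Matrix.mulVec, Matrix.vecMulVec_apply, dotProduct]
    have : ∑ j, q i * q j * piv j = q i * (q ⬝ᵥ piv) := by
      simp [dotProduct, Finset.mul_sum, mul_assoc]
    rw [this, hpiv, mul_zero]
    rfl
  rw [this, zero_add]
end
end

section
/- For l ∈ {1,2,3}, the flow Ψ_{t,l} is the exact solution of the Hamiltonian system dq/dt = ∇_π V_l(q,π), dπ/dt = -∇_q V_l(q,π) with V_l(q,π) = (1/(8 I_l)) (π^T S_l q)^2; that is, the curves Q(t) = cos(χ_l t) q + sin(χ_l t) S_l q, Π(t) = cos(χ_l t) π + sin(χ_l t) S_l π satisfy Q'(t) = (1/(4 I_l)) (Π(t)^T S_l Q(t)) S_l Q(t) and Π'(t) = (1/(4 I_l)) (Π(t)^T S_l Q(t)) S_l Π(t). -/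
open Matrix Real

noncomputable section

lemma Skey1 (S : Matrix (Fin 4) (Fin 4) ℝ) (hS : S = S1 ∨ S = S2 ∨ S = S3) :
    ∀ u v : Fin 4 → ℝ, S.mulVec u ⬝ᵥ S.mulVec v = u ⬝ᵥ v := by
  rcases hS with h | h | h <;> subst h <;> intro u v <;>
    simp [S1, S2, S3, mulVec, dotProduct, Fin.sum_univ_four, Matrix.vecHead,
      Matrix.vecTail] <;> ring

lemma Skey2 (S : Matrix (Fin 4) (Fin 4) ℝ) (hS : S = S1 ∨ S = S2 ∨ S = S3) :
    ∀ v : Fin 4 → ℝ, S.mulVec (S.mulVec v) = -v := by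
  rcases hS with h | h | h <;> subst h <;> intro v <;> funext i <;> fin_cases i <;>
    simp [S1, S2, S3, mulVec, dotProduct, Fin.sum_univ_four, Matrix.vecHead,
      Matrix.vecTail]

lemma Skey3 (S : Matrix (Fin 4) (Fin 4) ℝ) (hS : S = S1 ∨ S = S2 ∨ S = S3) :
    ∀ u v : Fin 4 → ℝ, u ⬝ᵥ S.mulVec v = -(S.mulVec u ⬝ᵥ v) := by
  rcases hS with h | h | h <;> subst h <;> intro u v <;>
    simp [S1, S2, S3, mulVec, dotProduct, Fin.sum_univ_four, Matrix.vecHead,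
      Matrix.vecTail] <;> ring

lemma conserve (S : Matrix (Fin 4) (Fin 4) ℝ)
    (h1 : ∀ u v : Fin 4 → ℝ, S.mulVec u ⬝ᵥ S.mulVec v = u ⬝ᵥ v)
    (h2 : ∀ v : Fin 4 → ℝ, S.mulVec (S.mulVec v) = -v)
    (h3 : ∀ u v : Fin 4 → ℝ, u ⬝ᵥ S.mulVec v = -(S.mulVec u ⬝ᵥ v))
    (q piv : Fin 4 → ℝ) (c s : ℝ) (hcs : s ^ 2 + c ^ 2 = 1) :
    (c • piv + s • S.mulVec piv) ⬝ᵥ S.mulVec (c • q + s • S.mulVec q)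
      = piv ⬝ᵥ S.mulVec q := by
  rw [Matrix.mulVec_add, Matrix.mulVec_smul, Matrix.mulVec_smul, h2]
  simp only [add_dotProduct, smul_dotProduct, dotProduct_add, dotProduct_smul,
    smul_eq_mul, dotProduct_neg, smul_neg]
  rw [h1, h3 piv q]
  linear_combination (-(S.mulVec piv ⬝ᵥ q)) * hcs

lemma mainlem (S : Matrix (Fin 4) (Fin 4) ℝ)
    (h1 : ∀ u v : Fin 4 → ℝ, S.mulVec u ⬝ᵥ S.mulVec v = u ⬝ᵥ v)
    (h2 : ∀ v : Fin 4 → ℝ, S.mulVec (S.mulVec v) = -v)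
    (h3 : ∀ u v : Fin 4 → ℝ, u ⬝ᵥ S.mulVec v = -(S.mulVec u ⬝ᵥ v))
    (Il : ℝ) (q piv : Fin 4 → ℝ) :
    let χ : ℝ := (1 / (4 * Il)) * (piv ⬝ᵥ S.mulVec q)
    let Q : ℝ → (Fin 4 → ℝ) := fun t => Real.cos (χ * t) • q + Real.sin (χ * t) • S.mulVec q
    let Piv : ℝ → (Fin 4 → ℝ) := fun t => Real.cos (χ * t) • piv + Real.sin (χ * t) • S.mulVec piv
    ∀ t : ℝ,
      HasDerivAt Q (((1 / (4 * Il)) * (Piv t ⬝ᵥ S.mulVec (Q t))) • S.mulVec (Q t)) t ∧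
      HasDerivAt Piv (((1 / (4 * Il)) * (Piv t ⬝ᵥ S.mulVec (Q t))) • S.mulVec (Piv t)) t := by
  intro χ Q Piv t
  have hcons : Piv t ⬝ᵥ S.mulVec (Q t) = piv ⬝ᵥ S.mulVec q :=
    conserve S h1 h2 h3 q piv _ _ (sin_sq_add_cos_sq (χ * t))
  have hχ : (1 / (4 * Il)) * (Piv t ⬝ᵥ S.mulVec (Q t)) = χ := by
    rw [hcons]
  rw [hχ]
  have hlin : HasDerivAt (fun s : ℝ => χ * s) χ t := by
    simpa using (hasDerivAt_id t).const_mul χ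
  constructor
  · have h := ((hlin.cos).smul_const q).add ((hlin.sin).smul_const (S.mulVec q))
    convert h using 1
    case e'_4 => rfl
    case e'_5 => rfl
    case e'_6 => rfl
    case e'_8 => rfl
    rw [Matrix.mulVec_add, Matrix.mulVec_smul, Matrix.mulVec_smul, h2]
    funext i
    simp [Matrix.mulVec_add, Matrix.mulVec_smul]
    ring
  · have h := ((hlin.cos).smul_const piv).add ((hlin.sin).smul_const (S.mulVec piv))
    convert h using 1
    case e'_4 => rfl
    case e'_5 => rfl
    case e'_6 => rfl
    case e'_8 => rfl
    rw [Matrix.mulVec_add, Matrix.mulVec_smul, Matrix.mulVec_smul, h2]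
    funext i
    simp [Matrix.mulVec_add, Matrix.mulVec_smul]
    ring

/-- the curves `Q(t), Piv(t)` of `Ψ_{t,l}` solve the Hamiltonian system
for `V_l(q,piv) = (1/(8 I_l)) (pivᵀ S_l q)²`:
`Q'(t) = (1/(4 I_l)) (Piv(t)ᵀ S_l Q(t)) S_l Q(t)` and
`Piv'(t) = (1/(4 I_l)) (Piv(t)ᵀ S_l Q(t)) S_l Piv(t)`. -/
theorem Psi_solves_Hamiltonian (S : Matrix (Fin 4) (Fin 4) ℝ)
    (hS : S = S1 ∨ S = S2 ∨ S = S3) (Il : ℝ) (hIl : 0 < Il)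
    (q piv : Fin 4 → ℝ) :
    let χ : ℝ := (1 / (4 * Il)) * (piv ⬝ᵥ S.mulVec q)
    let Q : ℝ → (Fin 4 → ℝ) := fun t => Real.cos (χ * t) • q + Real.sin (χ * t) • S.mulVec q
    let Piv : ℝ → (Fin 4 → ℝ) := fun t => Real.cos (χ * t) • piv + Real.sin (χ * t) • S.mulVec piv
    ∀ t : ℝ,
      HasDerivAt Q (((1 / (4 * Il)) * (Piv t ⬝ᵥ S.mulVec (Q t))) • S.mulVec (Q t)) t ∧
      HasDerivAt Piv (((1 / (4 * Il)) * (Piv t ⬝ᵥ S.mulVec (Q t))) • S.mulVec (Piv t)) t :=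
  mainlem S (Skey1 S hS) (Skey2 S hS) (Skey3 S hS) Il q piv
end
end

section
/- (Rodrigues formula for 4×4 skew-symmetric matrices) Let A be the skew-symmetric matrix parameterized by u_1,...,u_6, with a_2 = Σ u_i^2, a_0 = (u_1 u_6 + u_3 u_4 - u_2 u_5)^2, δ = sqrt(a_2^2 - 4 a_0), α = sqrt((a_2 - δ)/2), μ = sqrt((a_2 + δ)/2). If δ > 0 and α > 0, then exp(A) = cos(μ) I + (sin(μ)/μ) A + (aA + bI)(A^2 + μ^2 I), where a = (sin α/α − sin μ/μ)/δ and b = (cos α − cos μ)/δ. -/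
open Matrix Real

noncomputable section

set_option maxHeartbeats 1000000

set_option maxHeartbeats 1000000

/-- The general real skew-symmetric 4×4 matrix parameterized by `u₁,…,u₆`. -/
def skewA (u1 u2 u3 u4 u5 u6 : ℝ) : Matrix (Fin 4) (Fin 4) ℝ :=
  !![0, u6, u5, u3; -u6, 0, u4, u2; -u5, -u4, 0, u1; -u3, -u2, -u1, 0]

lemma skewA_sq (u1 u2 u3 u4 u5 u6 : ℝ) :
    skewA u1 u2 u3 u4 u5 u6 * skewA u1 u2 u3 u4 u5 u6 =
    !![-(u6^2+u5^2+u3^2), -u5*u4 - u3*u2, u6*u4 - u3*u1, u6*u2 + u5*u1;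
       -u4*u5 - u2*u3, -(u6^2+u4^2+u2^2), -u6*u5 - u2*u1, -u6*u3 + u4*u1;
       u4*u6 - u1*u3, -u5*u6 - u1*u2, -(u5^2+u4^2+u1^2), -u5*u3 - u4*u2;
       u2*u6 + u1*u5, -u3*u6 + u1*u4, -u3*u5 - u2*u4, -(u3^2+u2^2+u1^2)] := by
  ext i j
  fin_cases i <;> fin_cases j <;>
    simp [skewA, Matrix.mul_apply, Fin.sum_univ_four] <;> ring

lemma skewA_CH (u1 u2 u3 u4 u5 u6 : ℝ) :
    skewA u1 u2 u3 u4 u5 u6 * skewA u1 u2 u3 u4 u5 u6 *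
      (skewA u1 u2 u3 u4 u5 u6 * skewA u1 u2 u3 u4 u5 u6) =
    (-(u1 ^ 2 + u2 ^ 2 + u3 ^ 2 + u4 ^ 2 + u5 ^ 2 + u6 ^ 2)) •
        (skewA u1 u2 u3 u4 u5 u6 * skewA u1 u2 u3 u4 u5 u6) +
      (-((u1 * u6 + u3 * u4 - u2 * u5) ^ 2)) • (1 : Matrix (Fin 4) (Fin 4) ℝ) := by
  rw [skewA_sq]
  ext i j
  fin_cases i <;> fin_cases j <;>
    simp [Matrix.mul_apply, Fin.sum_univ_four, Matrix.one_apply] <;> ring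


lemma exp_cube (M : Matrix (Fin 4) (Fin 4) ℝ) (t : ℝ) (ht : t ≠ 0)
    (h3 : M * M * M = (-(t ^ 2)) • M) :
    NormedSpace.exp M = 1 + (Real.sin t / t) • M +
      ((1 - Real.cos t) / t ^ 2) • (M * M) := by
  have hfact : ∀ n : ℕ, ((n.factorial : ℝ)) ≠ 0 := fun n =>
    Nat.cast_ne_zero.mpr (Nat.factorial_ne_zero n)
  have hodd : ∀ k : ℕ, M ^ (2 * k + 1) = ((-(t ^ 2)) ^ k) • M := by
    intro k
    induction k with
    | zero => simp
    | succ k ih =>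
      have h : 2 * (k + 1) + 1 = (2 * k + 1) + 1 + 1 := by ring
      rw [h, pow_succ, pow_succ, ih, smul_mul_assoc, smul_mul_assoc, h3, smul_smul, ← pow_succ]
  have heven : ∀ k : ℕ, M ^ (2 * (k + 1)) = ((-(t ^ 2)) ^ k) • (M * M) := by
    intro k
    have h : 2 * (k + 1) = (2 * k + 1) + 1 := by ring
    rw [h, pow_succ, hodd, smul_mul_assoc]
  have hOdd : HasSum (fun k : ℕ => (((2 * k + 1).factorial : ℝ))⁻¹ • M ^ (2 * k + 1))
      ((Real.sin t / t) • M) := by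
    have h := ((Real.hasSum_sin t).div_const t).smul_const M
    have hfun : (fun k : ℕ => ((-1:ℝ) ^ k * t ^ (2*k+1) / ((2*k+1).factorial) / t) • M)
        = fun k : ℕ => (((2*k+1).factorial : ℝ))⁻¹ • M ^ (2*k+1) := by
      funext k
      rw [hodd, smul_smul]
      congr 1
      rw [show ((-(t^2))^k : ℝ) = (-1)^k * t^(2*k) by rw [neg_pow, ← pow_mul]]
      field_simp
      ring
    exact hfun ▸ h
  have hidx : ∀ n : ℕ, 2 * (n + 1) = 2 * n + 2 := fun n => by ring
  have hc1 : HasSum (fun n : ℕ => (-1:ℝ) ^ (n+1) * t ^ (2*(n+1)) / ((2*(n+1)).factorial))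
      (Real.cos t - 1) := by
    refine (hasSum_nat_add_iff
      (f := fun n : ℕ => (-1:ℝ) ^ n * t ^ (2*n) / ((2*n).factorial)) 1).mpr ?_
    convert Real.hasSum_cos t using 1
    · rfl
    simp [Finset.sum_range_one]
  have hc2 : HasSum (fun n : ℕ => (-1:ℝ)^n * t^(2*n) / ((2*n+2).factorial))
      ((1 - Real.cos t)/t^2) := by
    simp only [hidx] at hc1
    have h := hc1.mul_right (-(1 / t^2))
    have hfun : (fun n : ℕ => (-1:ℝ) ^ (n+1) * t ^ (2*n+2) / ((2*n+2).factorial) * (-(1 / t^2)))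
        = fun n : ℕ => (-1:ℝ)^n * t^(2*n) / ((2*n+2).factorial) := by
      funext n
      rw [pow_succ, pow_add]
      field_simp
    rw [hfun] at h
    convert h using 1
    · rfl
    field_simp
    ring
  have hEvenShift : HasSum (fun k : ℕ => (((2*(k+1)).factorial : ℝ))⁻¹ • M ^ (2*(k+1)))
      (((1 - Real.cos t)/t^2) • (M*M)) := by
    have h := hc2.smul_const (M*M)
    have hfun : (fun n : ℕ => ((-1:ℝ)^n * t^(2*n) / ((2*n+2).factorial)) • (M*M))
        = fun k : ℕ => (((2*(k+1)).factorial : ℝ))⁻¹ • M ^ (2*(k+1)) := by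
      funext k
      rw [heven, smul_smul, hidx]
      congr 1
      rw [show ((-(t^2))^k : ℝ) = (-1)^k * t^(2*k) by rw [neg_pow, ← pow_mul]]
      ring
    exact hfun ▸ h
  have hEven : HasSum (fun k : ℕ => (((2*k).factorial : ℝ))⁻¹ • M ^ (2*k))
      (1 + ((1 - Real.cos t)/t^2) • (M*M)) := by
    have h := (hasSum_nat_add_iff
      (f := fun k : ℕ => (((2*k).factorial : ℝ))⁻¹ • M ^ (2*k)) 1).mp hEvenShift
    simpa [Finset.sum_range_one, add_comm] using h
  calc NormedSpace.exp M = ∑' n : ℕ, ((n.factorial : ℝ))⁻¹ • M ^ n := by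
        rw [NormedSpace.exp_eq_tsum ℝ]
    _ = 1 + ((1 - Real.cos t)/t^2) • (M*M) + (Real.sin t / t) • M :=
        (HasSum.even_add_odd (f := fun n : ℕ => ((n.factorial : ℝ))⁻¹ • M ^ n) hEven hOdd).tsum_eq
    _ = 1 + (Real.sin t / t) • M + ((1 - Real.cos t) / t ^ 2) • (M * M) := by abel

set_option maxHeartbeats 1000000


lemma rodrigues_aux (A : Matrix (Fin 4) (Fin 4) ℝ) (α μ a b : ℝ)
    (hα : α ≠ 0) (hμ : μ ≠ 0) (hne : μ ^ 2 - α ^ 2 ≠ 0)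
    (hCH : A * (A * (A * A)) = (-(α ^ 2 + μ ^ 2)) • (A * A) +
      (-(α ^ 2 * μ ^ 2)) • (1 : Matrix (Fin 4) (Fin 4) ℝ))
    (ha : a = (Real.sin α / α - Real.sin μ / μ) / (μ ^ 2 - α ^ 2))
    (hb : b = (Real.cos α - Real.cos μ) / (μ ^ 2 - α ^ 2)) :
    NormedSpace.exp A =
      Real.cos μ • (1 : Matrix (Fin 4) (Fin 4) ℝ) + (Real.sin μ / μ) • A +
        (a • A + b • (1 : Matrix (Fin 4) (Fin 4) ℝ)) *
          (A * A + (μ ^ 2) • (1 : Matrix (Fin 4) (Fin 4) ℝ)) := by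
  set E1 : Matrix (Fin 4) (Fin 4) ℝ :=
    (μ ^ 2 - α ^ 2)⁻¹ • (A * A + (μ ^ 2) • 1) with hE1
  set E2 : Matrix (Fin 4) (Fin 4) ℝ :=
    (μ ^ 2 - α ^ 2)⁻¹ • (-(A * A) + (-(α ^ 2)) • 1) with hE2
  have hE1pE2 : E1 + E2 = 1 := by
    rw [hE1, hE2]; match_scalars <;> (field_simp; try ring)
  have hE11 : E1 * E1 = E1 := by
    rw [hE1]
    simp only [smul_add, smul_neg, smul_smul, smul_mul_assoc, mul_smul_comm, add_mul, mul_add,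
      neg_mul, mul_neg, neg_neg, mul_one, one_mul, mul_assoc, hCH]
    match_scalars <;> (field_simp; try ring)
  have hE12 : E1 * E2 = 0 := by
    rw [hE1, hE2]
    simp only [smul_add, smul_neg, smul_smul, smul_mul_assoc, mul_smul_comm, add_mul, mul_add,
      neg_mul, mul_neg, neg_neg, mul_one, one_mul, mul_assoc, hCH]
    match_scalars <;> (field_simp; try ring)
  have hA2E1 : (A * A) * E1 = (-(α ^ 2)) • E1 := by
    rw [hE1]
    simp only [smul_add, smul_neg, smul_smul, smul_mul_assoc, mul_smul_comm, add_mul, mul_add,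
      neg_mul, mul_neg, neg_neg, mul_one, one_mul, mul_assoc, hCH]
    match_scalars <;> (field_simp; try ring)
  have hA2E2 : (A * A) * E2 = (-(μ ^ 2)) • E2 := by
    rw [hE2]
    simp only [smul_add, smul_neg, smul_smul, smul_mul_assoc, mul_smul_comm, add_mul, mul_add,
      neg_mul, mul_neg, neg_neg, mul_one, one_mul, mul_assoc, hCH]
    match_scalars <;> (field_simp; try ring)
  have hE1A : E1 * A = A * E1 := by
    rw [hE1]
    simp only [smul_add, smul_neg, smul_smul, smul_mul_assoc, mul_smul_comm, add_mul, mul_add,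
      neg_mul, mul_neg, neg_neg, mul_one, one_mul, mul_assoc]
  have hE2A : E2 * A = A * E2 := by
    rw [hE2]
    simp only [smul_add, smul_neg, smul_smul, smul_mul_assoc, mul_smul_comm, add_mul, mul_add,
      neg_mul, mul_neg, neg_neg, mul_one, one_mul, mul_assoc]
  set X : Matrix (Fin 4) (Fin 4) ℝ := A * E1 with hXd
  set Y : Matrix (Fin 4) (Fin 4) ℝ := A * E2 with hYd
  have hsum : X + Y = A := by
    rw [hXd, hYd, ← mul_add, hE1pE2, mul_one]
  have hXX : X * X = (-(α ^ 2)) • E1 := by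
    calc A * E1 * (A * E1) = A * ((E1 * A) * E1) := by rw [mul_assoc, ← mul_assoc E1 A E1]
      _ = A * (A * (E1 * E1)) := by rw [hE1A, mul_assoc]
      _ = (A * A) * E1 := by rw [hE11, ← mul_assoc]
      _ = (-(α ^ 2)) • E1 := hA2E1
  have hE22 : E2 * E2 = E2 := by
    rw [hE2]
    simp only [smul_add, smul_neg, smul_smul, smul_mul_assoc, mul_smul_comm, add_mul, mul_add,
      neg_mul, mul_neg, neg_neg, mul_one, one_mul, mul_assoc, hCH]
    match_scalars <;> (field_simp; try ring)
  have hE21 : E2 * E1 = 0 := by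
    rw [hE1, hE2]
    simp only [smul_add, smul_neg, smul_smul, smul_mul_assoc, mul_smul_comm, add_mul, mul_add,
      neg_mul, mul_neg, neg_neg, mul_one, one_mul, mul_assoc, hCH]
    match_scalars <;> (field_simp; try ring)
  have hYY : Y * Y = (-(μ ^ 2)) • E2 := by
    calc A * E2 * (A * E2) = A * ((E2 * A) * E2) := by rw [mul_assoc, ← mul_assoc E2 A E2]
      _ = A * (A * (E2 * E2)) := by rw [hE2A, mul_assoc]
      _ = (A * A) * E2 := by rw [hE22, ← mul_assoc]
      _ = (-(μ ^ 2)) • E2 := hA2E2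
  have hX3 : X * X * X = (-(α ^ 2)) • X := by
    rw [hXX, smul_mul_assoc]
    congr 1
    calc E1 * (A * E1) = (E1 * A) * E1 := by rw [mul_assoc]
      _ = A * (E1 * E1) := by rw [hE1A, mul_assoc]
      _ = A * E1 := by rw [hE11]
  have hY3 : Y * Y * Y = (-(μ ^ 2)) • Y := by
    rw [hYY, smul_mul_assoc]
    congr 1
    calc E2 * (A * E2) = (E2 * A) * E2 := by rw [mul_assoc]
      _ = A * (E2 * E2) := by rw [hE2A, mul_assoc]
      _ = A * E2 := by rw [hE22]
  have hXY : X * Y = 0 := by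
    calc A * E1 * (A * E2) = A * ((E1 * A) * E2) := by rw [mul_assoc, ← mul_assoc E1 A E2]
      _ = A * (A * (E1 * E2)) := by rw [hE1A, mul_assoc]
      _ = 0 := by rw [hE12, mul_zero, mul_zero]
  have hYX : Y * X = 0 := by
    calc A * E2 * (A * E1) = A * ((E2 * A) * E1) := by rw [mul_assoc, ← mul_assoc E2 A E1]
      _ = A * (A * (E2 * E1)) := by rw [hE2A, mul_assoc]
      _ = 0 := by rw [hE21, mul_zero, mul_zero]
  have hXE2 : X * E2 = 0 := by
    rw [hXd, mul_assoc, hE12, mul_zero]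
  have hYE1 : Y * E1 = 0 := by
    rw [hYd, mul_assoc, hE21, mul_zero]
  have hE1Y : E1 * Y = 0 := by
    rw [hYd, ← mul_assoc, hE1A, mul_assoc, hE12, mul_zero]
  have hE2X : E2 * X = 0 := by
    rw [hXd, ← mul_assoc, hE2A, mul_assoc, hE21, mul_zero]
  have hcom : Commute X Y := hXY.trans hYX.symm
  have hPmu : A * A + (μ ^ 2) • (1 : Matrix (Fin 4) (Fin 4) ℝ) = (μ ^ 2 - α ^ 2) • E1 := by
    rw [hE1, smul_smul, mul_inv_cancel₀ hne, one_smul]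
  calc NormedSpace.exp A = NormedSpace.exp (X + Y) := by rw [hsum]
    _ = NormedSpace.exp X * NormedSpace.exp Y := Matrix.exp_add_of_commute X Y hcom
    _ = (1 + (Real.sin α / α) • X + ((1 - Real.cos α) / α ^ 2) • (X * X)) *
        (1 + (Real.sin μ / μ) • Y + ((1 - Real.cos μ) / μ ^ 2) • (Y * Y)) := by
          rw [exp_cube X α hα hX3, exp_cube Y μ hμ hY3]
    _ = (1 + (Real.sin α / α) • X + (Real.cos α - 1) • E1) *
        (1 + (Real.sin μ / μ) • Y + (Real.cos μ - 1) • E2) := by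
          have hcα : ((1 - Real.cos α) / α ^ 2) • (X * X) = (Real.cos α - 1) • E1 := by
            rw [hXX, smul_smul]
            congr 1
            field_simp
            ring
          have hcμ : ((1 - Real.cos μ) / μ ^ 2) • (Y * Y) = (Real.cos μ - 1) • E2 := by
            rw [hYY, smul_smul]
            congr 1
            field_simp
            ring
          rw [hcα, hcμ]
    _ = 1 + (Real.sin μ / μ) • Y + (Real.cos μ - 1) • E2 + (Real.sin α / α) • X
        + (Real.cos α - 1) • E1 := by
          simp only [mul_add, add_mul, mul_one, one_mul, smul_mul_assoc, mul_smul_comm,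
            hXY, hXE2, hE1Y, hE12, smul_zero, add_zero, zero_add, mul_zero]
          abel
    _ = Real.cos μ • (1 : Matrix (Fin 4) (Fin 4) ℝ) + (Real.sin μ / μ) • A +
        (a • A + b • (1 : Matrix (Fin 4) (Fin 4) ℝ)) *
          (A * A + (μ ^ 2) • (1 : Matrix (Fin 4) (Fin 4) ℝ)) := by
      rw [hPmu]
      have h1 : (a • A + b • (1 : Matrix (Fin 4) (Fin 4) ℝ)) * ((μ ^ 2 - α ^ 2) • E1)
          = (a * (μ ^ 2 - α ^ 2)) • X + (b * (μ ^ 2 - α ^ 2)) • E1 := by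
        rw [hXd]
        simp only [add_mul, smul_mul_assoc, one_mul, mul_smul_comm, smul_smul]
        module
      rw [h1, ← hE1pE2, ← hsum, ha, hb]
      match_scalars <;> (field_simp; try ring)

/-- Rodrigues formula for the exponential of a real skew-symmetric
4×4 matrix: if `δ > 0` and `α > 0`, then
`exp(A) = cos(μ) I + (sin μ/μ) A + (aA + bI)(A² + μ² I)` with
`a = (sin α/α − sin μ/μ)/δ`, `b = (cos α − cos μ)/δ`. -/
theorem rodrigues_formula (u1 u2 u3 u4 u5 u6 : ℝ)
    (a2 a0 δ α μ a b : ℝ)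
    (ha2 : a2 = u1 ^ 2 + u2 ^ 2 + u3 ^ 2 + u4 ^ 2 + u5 ^ 2 + u6 ^ 2)
    (ha0 : a0 = (u1 * u6 + u3 * u4 - u2 * u5) ^ 2)
    (hδ : δ = Real.sqrt (a2 ^ 2 - 4 * a0))
    (hα : α = Real.sqrt ((a2 - δ) / 2))
    (hμ : μ = Real.sqrt ((a2 + δ) / 2))
    (hδpos : 0 < δ) (hαpos : 0 < α)
    (ha : a = (Real.sin α / α - Real.sin μ / μ) / δ)
    (hb : b = (Real.cos α - Real.cos μ) / δ) :
    NormedSpace.exp (skewA u1 u2 u3 u4 u5 u6) =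
      Real.cos μ • (1 : Matrix (Fin 4) (Fin 4) ℝ) +
        (Real.sin μ / μ) • skewA u1 u2 u3 u4 u5 u6 +
        (a • skewA u1 u2 u3 u4 u5 u6 + b • (1 : Matrix (Fin 4) (Fin 4) ℝ)) *
          (skewA u1 u2 u3 u4 u5 u6 * skewA u1 u2 u3 u4 u5 u6 +
            (μ ^ 2) • (1 : Matrix (Fin 4) (Fin 4) ℝ)) := by
  have hnn : 0 ≤ a2 ^ 2 - 4 * a0 := by
    by_contra h
    push_neg at h
    rw [hδ, Real.sqrt_eq_zero_of_nonpos h.le] at hδpos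
    exact lt_irrefl 0 hδpos
  have hδ2 : δ ^ 2 = a2 ^ 2 - 4 * a0 := by rw [hδ, Real.sq_sqrt hnn]
  have hαarg : 0 < (a2 - δ) / 2 := Real.sqrt_pos.mp (hα ▸ hαpos)
  have hα2 : α ^ 2 = (a2 - δ) / 2 := by rw [hα, Real.sq_sqrt hαarg.le]
  have hμargpos : 0 < (a2 + δ) / 2 := by linarith
  have hμ2 : μ ^ 2 = (a2 + δ) / 2 := by rw [hμ, Real.sq_sqrt hμargpos.le]
  have hμpos : 0 < μ := hμ ▸ Real.sqrt_pos.mpr hμargpos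
  have hδeq : δ = μ ^ 2 - α ^ 2 := by rw [hα2, hμ2]; ring
  have hne : μ ^ 2 - α ^ 2 ≠ 0 := by rw [← hδeq]; exact ne_of_gt hδpos
  have hsum : α ^ 2 + μ ^ 2 = a2 := by rw [hα2, hμ2]; ring
  have hprod : α ^ 2 * μ ^ 2 = a0 := by
    rw [hα2, hμ2]
    linear_combination (-1/4 : ℝ) * hδ2
  have hCH : skewA u1 u2 u3 u4 u5 u6 * (skewA u1 u2 u3 u4 u5 u6 *
      (skewA u1 u2 u3 u4 u5 u6 * skewA u1 u2 u3 u4 u5 u6)) =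
      (-(α ^ 2 + μ ^ 2)) • (skewA u1 u2 u3 u4 u5 u6 * skewA u1 u2 u3 u4 u5 u6) +
        (-(α ^ 2 * μ ^ 2)) • (1 : Matrix (Fin 4) (Fin 4) ℝ) := by
    rw [← mul_assoc, hsum, hprod, ha2, ha0]
    exact skewA_CH u1 u2 u3 u4 u5 u6
  exact rodrigues_aux (skewA u1 u2 u3 u4 u5 u6) α μ a b (ne_of_gt hαpos) (ne_of_gt hμpos)
    hne hCH (ha.trans (by rw [hδeq])) (hb.trans (by rw [hδeq]))
end
end
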